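/- Let α > 0 and n be an integer with n > (2 − 3α)/α and n ≥ 1. Then the function g(z) = 1/z + z^n/(n+2) fails to satisfy Re(z g'(z)/g(z)) < −α for all z in the punctured unit disc E; i.e., there exists z ∈ E with Re(z g'(z)/g(z)) ≥ −α. -/

import Mathlib

open Complex

theorem stmt7 (α : ℝ) (hα : 0 < α) (n : ℕ) (hn : 1 ≤ n)
    (hnα : (n : ℝ) > (2 - 3 * α) / α)
    (g : ℂ → ℂ) (hg : ∀ z : ℂ, z ≠ 0 → g z = z⁻¹ + z ^ n / (n + 2)) :
    ∃ z : ℂ, 0 < ‖z‖ ∧ ‖z‖ < 1 ∧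
      (z * deriv g z / g z).re ≥ -α := by
  -- key numeric fact: α * (n + 3) > 2
  have hn2 : (0:ℝ) < (n:ℝ) + 2 := by positivity
  have hkey : 2 < α * ((n:ℝ) + 3) := by
    have := (div_lt_iff₀ hα).mp (lt_of_le_of_lt (le_refl _) hnα)
    nlinarith
  -- choose t
  set c : ℝ := ((n:ℝ) + 2) * (1 - α) / ((n:ℝ) + α) with hc
  have hna : (0:ℝ) < (n:ℝ) + α := by positivity
  have hclt1 : c < 1 := by
    rw [hc, div_lt_one hna]; nlinarith
  set t : ℝ := max c (1/2) with htdef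
  have ht0 : (0:ℝ) < t := lt_of_lt_of_le (by norm_num) (le_max_right _ _)
  have ht1 : t < 1 := max_lt hclt1 (by norm_num)
  have htc : c ≤ t := le_max_left _ _
  -- key inequality on t
  have hkeyt : ((n:ℝ) + 2) * (1 - α) ≤ t * ((n:ℝ) + α) := by
    have := (div_le_iff₀ hna).mp htc
    linarith
  -- choose r
  set r : ℝ := t ^ (((n:ℝ) + 1)⁻¹) with hrdef
  have hr0 : 0 < r := Real.rpow_pos_of_pos ht0 _
  have hr1 : r < 1 := Real.rpow_lt_one ht0.le ht1 (by positivity)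
  have hrt : r ^ (n + 1) = t := by
    rw [hrdef, ← Real.rpow_natCast (t ^ _) (n+1), ← Real.rpow_mul ht0.le]
    push_cast
    rw [inv_mul_cancel₀ (by positivity), Real.rpow_one]
  have hrne : r ≠ 0 := hr0.ne'
  refine ⟨(r : ℂ), ?_, ?_, ?_⟩
  · simpa [Complex.norm_real, abs_of_pos hr0] using hr0
  · simpa [Complex.norm_real, abs_of_pos hr0] using hr1
  · -- compute derivative
    set z : ℂ := (r : ℂ) with hzdef
    have hz : z ≠ 0 := by
      simp [hzdef, Complex.ofReal_ne_zero, hrne]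
    have hderiv : deriv g z = -((z^2)⁻¹) + (n : ℂ) * z ^ (n-1) / ((n:ℂ) + 2) := by
      have h1 : HasDerivAt (fun w : ℂ => w⁻¹ + w ^ n / ((n:ℂ) + 2))
          (-((z^2)⁻¹) + (n : ℂ) * z ^ (n-1) / ((n:ℂ) + 2)) z :=
        (hasDerivAt_inv hz).add ((hasDerivAt_pow n z).div_const _)
      have h2 : HasDerivAt g (-((z^2)⁻¹) + (n : ℂ) * z ^ (n-1) / ((n:ℂ) + 2)) z := by
        apply h1.congr_of_eventuallyEq
        filter_upwards [isOpen_compl_singleton.eventually_mem hz] with w hw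
        exact hg w hw
      exact h2.deriv
    have hgz : g z = ((r⁻¹ + r ^ n / ((n:ℝ) + 2) : ℝ) : ℂ) := by
      rw [hg z hz, hzdef]; push_cast; ring
    have hdz : deriv g z = ((-((r^2)⁻¹) + (n:ℝ) * r ^ (n-1) / ((n:ℝ) + 2) : ℝ) : ℂ) := by
      rw [hderiv, hzdef]; push_cast; ring
    have hre : (z * deriv g z / g z).re
        = r * (-((r^2)⁻¹) + (n:ℝ) * r ^ (n-1) / ((n:ℝ) + 2)) / (r⁻¹ + r ^ n / ((n:ℝ) + 2)) := by
      rw [hgz, hdz, hzdef, ← Complex.ofReal_mul, ← Complex.ofReal_div, Complex.ofReal_re]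
    rw [hre]
    -- rewrite numerator and denominator
    have hs : r * r ^ (n - 1) = r ^ n := by
      rw [← pow_succ']; congr 1; omega
    have ht' : r * r ^ n = t := by
      rw [← hrt, pow_succ']
    have hnum : r * (-((r^2)⁻¹) + (n:ℝ) * r ^ (n-1) / ((n:ℝ) + 2))
        = ((n:ℝ) * t - ((n:ℝ) + 2)) / (r * ((n:ℝ) + 2)) := by
      have h4 : r^4 * r^(n-1) = r^2 * t := by linear_combination r^3 * hs + r^2 * ht'
      field_simp
      ring_nf
      linear_combination (n:ℝ) * (r * hs + ht')
    have hden : r⁻¹ + r ^ n / ((n:ℝ) + 2) = (t + ((n:ℝ) + 2)) / (r * ((n:ℝ) + 2)) := by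
      field_simp
      linarith [ht']
    rw [hnum, hden, div_div_div_cancel_right₀ (by positivity : r * ((n:ℝ)+2) ≠ 0)]
    have htn2 : (0:ℝ) < t + ((n:ℝ) + 2) := by positivity
    rw [ge_iff_le, le_div_iff₀ htn2]
    nlinarith
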